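/- Let S = ⟨A ∣ u → v⟩ be a left cancellative one-rule SRS, let x_1 →_S x_2 →_S ⋯ →_S x_n be a reduction, and let x̄_1 → x̄_2 → ⋯ → x̄_n be its lift to the decorated SRS S̄. If x̄_n contains a decorated letter and the leftmost decorated letter of x̄_n is at position i, then the letter at position i of x_1 is the first letter of u and the letter at position i of x_n is the first letter of v. -/

import Mathlib

/-- One-step reduction of the one-rule SRS `⟨A ∣ u → v⟩`: `w →_S w'`. -/
def Step {A : Type*} (u v w w' : List A) : Prop :=
  ∃ p q : List A, w = p ++ u ++ q ∧ w' = p ++ v ++ q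

/-- One-step reduction of `⟨A ∣ u → v⟩` carried out at position `i`. -/
def StepAt {A : Type*} (u v : List A) (i : ℕ) (w w' : List A) : Prop :=
  ∃ p q : List A, p.length = i ∧ w = p ++ u ++ q ∧ w' = p ++ v ++ q

/-- The diamond graph `M_k` is embeddable in the reduction graph `G_S` of
`S = ⟨A ∣ u → v⟩`: there are pairwise distinct words `x, y, z_1, …, z_k`
with `x →_S z_i` and `z_i →_S y` for every `i`. -/
def MkEmbeddable {A : Type*} (u v : List A) (k : ℕ) : Prop :=
  ∃ (x y : List A) (z : Fin k → List A),
    Function.Injective z ∧ (∀ i, x ≠ z i) ∧ (∀ i, y ≠ z i) ∧ x ≠ y ∧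
    ∀ i, Step u v x (z i) ∧ Step u v (z i) y

/-- Projection from the decorated alphabet `A ⊕ A` (`inl a` = plain letter `a`,
`inr a` = decorated letter `a•`) back to `A`. -/
def proj {A : Type*} : A ⊕ A → A := Sum.elim id id

/-- One-step reduction of the decorated SRS `S̄` carried out at position `i`:
some word `ū` projecting to `u` is replaced by the fully decorated `v•`. -/
def DecStepAt {A : Type*} (u v : List A) (i : ℕ) (w w' : List (A ⊕ A)) : Prop :=
  ∃ p q ubar : List (A ⊕ A),
    p.length = i ∧ ubar.map proj = u ∧
    w = p ++ ubar ++ q ∧ w' = p ++ v.map Sum.inr ++ q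

/-- The leftmost decorated letter of `w` is at position `i`. -/
def FirstDecorated {A : Type*} (w : List (A ⊕ A)) (i : ℕ) : Prop :=
  (∃ a : A, w[i]? = some (Sum.inr a)) ∧
  ∀ j < i, ∀ a : A, w[j]? ≠ some (Sum.inr a)

/-- The one-rule SRS `⟨A ∣ u → v⟩` is left cancellative:
`u, v` are nonempty and their first letters are distinct. -/
def LeftCancellative {A : Type*} (u v : List A) : Prop :=
  u ≠ [] ∧ v ≠ [] ∧ u.head? ≠ v.head?

/-- `w` is bordered with `T`: `T` is both a prefix and a suffix of `w`. -/
def Bordered {A : Type*} (T w : List A) : Prop :=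
  T <+: w ∧ T <:+ w

/-- `T` is self-overlap-free: `OVL(T) = ∅`, i.e. there is no nonempty `w`
with `T = x ++ w = w ++ y` for nonempty `x, y`. -/
def SelfOverlapFree {A : Type*} (T : List A) : Prop :=
  ∀ w x y : List A, w ≠ [] → x ≠ [] → y ≠ [] → T = x ++ w → T = w ++ y → False

/-- `glue T [R₁, …, R_k] = T R₁ T R₂ ⋯ T R_k T`, the word of `Bord_T` whose
canonical decomposition is `R₁, …, R_k`; thus `φ_T (glue T Rs) = Rs`
(a word of length `Rs.length` over the alphabet `B` of `T`-free words). -/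
def glue {A : Type*} (T : List A) : List (List A) → List A
  | [] => T
  | R :: Rs => T ++ R ++ glue T Rs


section AuxProof

variable {A : Type*}

/-- Backward propagation: an undecorated letter at position `i` whose whole
prefix is undecorated traces back unchanged to the start word. -/
lemma undec_back (u v : List A) (hu : u ≠ []) (hv : v ≠ []) :
    ∀ (n : ℕ) (x : Fin (n + 1) → List A) (xbar : Fin (n + 1) → List (A ⊕ A))
      (pos : Fin n → ℕ),
      xbar 0 = (x 0).map Sum.inl →
      (∀ j : Fin n, DecStepAt u v (pos j) (xbar j.castSucc) (xbar j.succ)) →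
      ∀ (i : ℕ) (a : A), (xbar (Fin.last n))[i]? = some (Sum.inl a) →
      (∀ j < i, ∀ b : A, (xbar (Fin.last n))[j]? ≠ some (Sum.inr b)) →
      (x 0)[i]? = some a := by
  intro n
  induction n with
  | zero =>
    intro x xbar pos hstart _ i a ha _
    have h0 : (Fin.last 0 : Fin 1) = 0 := rfl
    rw [h0, hstart, List.getElem?_map] at ha
    rcases h : (x 0)[i]? with _ | b
    · rw [h] at ha; simp at ha
    · rw [h] at ha; simp at ha; rw [ha]
  | succ n ih =>
    intro x xbar pos hstart hdstep i a ha hpre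
    obtain ⟨p, q, ubar, hpl, hub, hw, hw'⟩ := hdstep (Fin.last n)
    have hlast : (Fin.last n).succ = Fin.last (n + 1) := rfl
    rw [hlast] at hw'
    -- v is nonempty
    obtain ⟨c, vt, rfl⟩ := List.exists_cons_of_ne_nil hv
    have hdecpos : (xbar (Fin.last (n + 1)))[p.length]? = some (Sum.inr c) := by
      rw [hw', List.append_assoc, List.getElem?_append_right le_rfl]
      simp
    have hilt : i < p.length := by
      rcases lt_trichotomy i p.length with h | h | h
      · exact h
      · rw [← h] at hdecpos; rw [hdecpos] at ha; simp at ha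
      · exact absurd hdecpos (hpre _ h c)
    have hkey : ∀ j ≤ i, (xbar (Fin.last n).castSucc)[j]? = (xbar (Fin.last (n + 1)))[j]? := by
      intro j hj
      rw [hw, hw', List.append_assoc, List.append_assoc,
        List.getElem?_append_left (lt_of_le_of_lt hj hilt),
        List.getElem?_append_left (lt_of_le_of_lt hj hilt)]
    have := ih (fun j => x j.castSucc) (fun j => xbar j.castSucc) (fun j => pos j.castSucc)
      (by simpa using hstart)
      (by
        intro j
        have := hdstep j.castSucc
        rwa [Fin.succ_castSucc] at this)
      i a (by rw [hkey i le_rfl]; exact ha)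
      (by intro j hj b hb; exact hpre j hj b (by rw [← hkey j (le_of_lt hj)]; exact hb))
    simpa using this

end AuxProof

/-- if `S` is left cancellative and the leftmost decorated letter
of the lift `x̄_n` is at position `i`, then the letter at position `i` of `x_1`
is the first letter of `u` and the letter at position `i` of `x_n` is the
first letter of `v`. -/
theorem first_decorated_letters {A : Type*} (u v : List A)
    (hlc : LeftCancellative u v) (n : ℕ)
    (x : Fin (n + 1) → List A) (xbar : Fin (n + 1) → List (A ⊕ A))
    (pos : Fin n → ℕ)
    (hstart : xbar 0 = (x 0).map Sum.inl)
    (hproj : ∀ j, (xbar j).map proj = x j)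
    (hstep : ∀ j : Fin n, StepAt u v (pos j) (x j.castSucc) (x j.succ))
    (hdstep : ∀ j : Fin n, DecStepAt u v (pos j) (xbar j.castSucc) (xbar j.succ))
    (i : ℕ) (hi : FirstDecorated (xbar (Fin.last n)) i) :
    (x 0)[i]? = u.head? ∧ (x (Fin.last n))[i]? = v.head? := by
  obtain ⟨hu, hv, hne⟩ := hlc
  induction n with
  | zero =>
    exfalso
    obtain ⟨⟨a, ha⟩, _⟩ := hi
    have h0 : (Fin.last 0 : Fin 1) = 0 := rfl
    rw [h0, hstart, List.getElem?_map] at ha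
    rcases h : (x 0)[i]? with _ | b
    · rw [h] at ha; simp at ha
    · rw [h] at ha; simp at ha
  | succ n ih =>
    obtain ⟨p, q, ubar, hpl, hub, hw, hw'⟩ := hdstep (Fin.last n)
    obtain ⟨p', q', hpl', hx, hx'⟩ := hstep (Fin.last n)
    have hlast : (Fin.last n).succ = Fin.last (n + 1) := rfl
    rw [hlast] at hw' hx'
    obtain ⟨c, vt, rfl⟩ := List.exists_cons_of_ne_nil hv
    obtain ⟨d, ut, rfl⟩ := List.exists_cons_of_ne_nil hu
    -- decorated letter at position p.length in the last word
    have hdecpos : (xbar (Fin.last (n + 1)))[p.length]? = some (Sum.inr c) := by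
      rw [hw', List.append_assoc, List.getElem?_append_right le_rfl]
      simp
    obtain ⟨⟨a, ha⟩, hpre⟩ := hi
    have hile : i ≤ p.length := by
      by_contra h
      exact hpre _ (lt_of_not_ge h) c hdecpos
    -- restricted families
    set x' : Fin (n + 1) → List A := fun j => x j.castSucc with hx'def
    set xbar' : Fin (n + 1) → List (A ⊕ A) := fun j => xbar j.castSucc
    set pos' : Fin n → ℕ := fun j => pos j.castSucc
    have hstart' : xbar' 0 = (x' 0).map Sum.inl := by simpa [xbar', x'] using hstart
    have hproj' : ∀ j, (xbar' j).map proj = x' j := fun j => hproj j.castSucc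
    have hstep' : ∀ j : Fin n, StepAt (d :: ut) (c :: vt) (pos' j) (x' j.castSucc) (x' j.succ) := by
      intro j
      have := hstep j.castSucc
      rwa [Fin.succ_castSucc] at this
    have hdstep' : ∀ j : Fin n, DecStepAt (d :: ut) (c :: vt) (pos' j)
        (xbar' j.castSucc) (xbar' j.succ) := by
      intro j
      have := hdstep j.castSucc
      rwa [Fin.succ_castSucc] at this
    rcases lt_or_eq_of_le hile with hilt | hieq
    · -- i < p.length : first decorated letter already in xbar (n)
      have hkey : ∀ j ≤ i, (xbar' (Fin.last n))[j]? = (xbar (Fin.last (n + 1)))[j]? := by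
        intro j hj
        show (xbar (Fin.last n).castSucc)[j]? = _
        rw [hw, hw', List.append_assoc, List.append_assoc,
          List.getElem?_append_left (lt_of_le_of_lt hj hilt),
          List.getElem?_append_left (lt_of_le_of_lt hj hilt)]
      have hi' : FirstDecorated (xbar' (Fin.last n)) i :=
        ⟨⟨a, by rw [hkey i le_rfl]; exact ha⟩,
         fun j hj b hb => hpre j hj b (by rw [← hkey j (le_of_lt hj)]; exact hb)⟩
      obtain ⟨h1, h2⟩ := ih x' xbar' pos' hstart' hproj' hstep' hdstep' hi'
      refine ⟨by simpa [x'] using h1, ?_⟩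
      have : (x (Fin.last (n + 1)))[i]? = (x (Fin.last n).castSucc)[i]? := by
        rw [hx, hx', List.append_assoc, List.append_assoc,
          List.getElem?_append_left (by rw [hpl', ← hpl]; exact hilt),
          List.getElem?_append_left (show i < p'.length by rw [hpl', ← hpl]; exact hilt)]
      rw [this]
      exact h2
    · -- i = p.length : the rewriting step created the first decorated letter
      have hipl' : p'.length = i := by rw [hpl', ← hpl, hieq]
      have hxn : (x (Fin.last (n + 1)))[i]? = (c :: vt).head? := by
        rw [hx', List.append_assoc, ← hipl', List.getElem?_append_right le_rfl]
        simp
      -- ubar is nonempty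
      have hubne : ubar ≠ [] := by
        intro h; rw [h] at hub; simp at hub
      obtain ⟨b, ubt, rfl⟩ := List.exists_cons_of_ne_nil hubne
      have hbd : proj b = d := by
        simpa using congrArg List.head? hub
      have hwi : (xbar' (Fin.last n))[i]? = some b := by
        show (xbar (Fin.last n).castSucc)[i]? = some b
        rw [hw, List.append_assoc, hieq, List.getElem?_append_right le_rfl]
        simp
      have hwpre : ∀ j < i, ∀ e : A, (xbar' (Fin.last n))[j]? ≠ some (Sum.inr e) := by
        intro j hj e he
        refine hpre j hj e ?_
        have he' : (xbar (Fin.last n).castSucc)[j]? = some (Sum.inr e) := he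
        rw [hw, List.append_assoc, List.getElem?_append_left (hieq ▸ hj)] at he'
        rw [hw', List.append_assoc, List.getElem?_append_left (hieq ▸ hj)]
        exact he'
      rcases b with b | b
      · -- undecorated letter at i in xbar n : propagate back
        have hbd' : b = d := by simpa [proj] using hbd
        have h1 := undec_back (d :: ut) (c :: vt) hu hv n x' xbar' pos'
          hstart' hdstep' i b hwi hwpre
        refine ⟨?_, hxn⟩
        rw [show x 0 = x' 0 from rfl, h1, hbd']
        rfl
      · -- decorated letter at i in xbar n : contradiction with left cancellativity
        exfalso
        have hi' : FirstDecorated (xbar' (Fin.last n)) i := ⟨⟨b, hwi⟩, hwpre⟩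
        obtain ⟨_, h2⟩ := ih x' xbar' pos' hstart' hproj' hstep' hdstep' hi'
        -- but (x' last)[i]? = u.head?
        have hxl : (x' (Fin.last n))[i]? = (d :: ut).head? := by
          show (x (Fin.last n).castSucc)[i]? = _
          rw [hx, List.append_assoc, ← hipl', List.getElem?_append_right le_rfl]
          simp
        exact hne (hxl ▸ h2)
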